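/- For all integers m_1, …, m_k (k ≥ 1) there exists an integer c such that I(m_1, …, m_k) = c · I(m_1 + … + m_k). In particular, since I(m) = n if m ≡ 0 (mod n) and I(m) = 0 otherwise, one has I(m_1, …, m_k) = 0 whenever m_1 + … + m_k ≢ 0 (mod n). -/

import Mathlib

open Finset

noncomputable section

/-- The exponential sum `I(m_1, …, m_k) = ∑ exp(2πi(m_1 j_1 + … + m_k j_k)/n)`,
the sum being taken over all `k`-tuples `(j_1, …, j_k)` of pairwise distinct
elements of `ℤ/nℤ` (represented by `Fin n`). -/
def expSum (n : ℕ) (k : ℕ) (m : Fin k → ℤ) : ℂ :=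
  ∑ t ∈ Finset.univ.filter (fun t : Fin k → Fin n => Function.Injective t),
    Complex.exp (2 * Real.pi * Complex.I * (∑ i, (m i : ℂ) * ((t i : ℕ) : ℂ)) / n)

namespace ExpSumAux

noncomputable def ee (n : ℕ) (a : ℤ) : ℂ := Complex.exp (2 * Real.pi * Complex.I * a / n)

lemma expSum_eq (n k : ℕ) (m : Fin k → ℤ) :
    expSum n k m = ∑ t ∈ Finset.univ.filter (fun t : Fin k → Fin n => Function.Injective t),
      ee n (∑ i, m i * ((t i : ℕ) : ℤ)) := by
  unfold expSum ee
  refine Finset.sum_congr rfl fun t _ => ?_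
  congr 1
  push_cast
  ring

lemma ee_add (n : ℕ) (a b : ℤ) : ee n (a + b) = ee n a * ee n b := by
  unfold ee
  rw [← Complex.exp_add]
  congr 1
  push_cast
  ring

lemma ee_nat_mul (n : ℕ) (hn : n ≠ 0) (b : ℤ) : ee n ((n : ℤ) * b) = 1 := by
  unfold ee
  have hn' : (n : ℂ) ≠ 0 := Nat.cast_ne_zero.mpr hn
  have : (2 * Real.pi * Complex.I * (((n : ℤ) * b : ℤ) : ℂ) / n) = (b : ℤ) * (2 * Real.pi * Complex.I) := by
    field_simp
    push_cast
    ring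
  rw [this, Complex.exp_int_mul_two_pi_mul_I]

lemma ee_eq_one_iff (n : ℕ) (hn : n ≠ 0) (a : ℤ) : ee n a = 1 ↔ (n : ℤ) ∣ a := by
  constructor
  · intro h
    unfold ee at h
    rw [Complex.exp_eq_one_iff] at h
    obtain ⟨c, hc⟩ := h
    have hπ : (Real.pi : ℂ) ≠ 0 := by exact_mod_cast Real.pi_ne_zero
    have hn' : (n : ℂ) ≠ 0 := Nat.cast_ne_zero.mpr hn
    refine ⟨c, ?_⟩
    have h0 : (2 * (Real.pi : ℂ) * Complex.I) ≠ 0 :=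
      mul_ne_zero (mul_ne_zero two_ne_zero (Complex.ofReal_ne_zero.2 Real.pi_ne_zero)) Complex.I_ne_zero
    field_simp at hc
    have e1 : 2 * (Real.pi : ℂ) * Complex.I * a = 2 * (Real.pi : ℂ) * Complex.I * ((c : ℂ) * n) := by
      linear_combination (2 * (Real.pi : ℂ) * Complex.I) * hc
    have h2 := mul_left_cancel₀ h0 e1
    rw [mul_comm]
    exact_mod_cast h2
  · rintro ⟨c, rfl⟩
    exact ee_nat_mul n hn c

lemma ee_pow (n : ℕ) (s : ℤ) (j : ℕ) : ee n (s * j) = (ee n s) ^ j := by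
  unfold ee
  rw [← Complex.exp_nat_mul]
  congr 1
  push_cast
  ring

lemma expSum_one_eq (n : ℕ) (s : ℤ) :
    expSum n 1 (fun _ => s) = ∑ j : Fin n, ee n (s * (j : ℕ)) := by
  rw [expSum_eq]
  have hfil : (Finset.univ.filter fun t : Fin 1 → Fin n => Function.Injective t) = Finset.univ := by
    refine Finset.filter_true_of_mem fun t _ => ?_
    intro a b _
    exact Subsingleton.elim a b
  rw [hfil]
  refine Fintype.sum_equiv (Equiv.funUnique (Fin 1) (Fin n)) _ _ fun t => ?_
  simp [Fin.sum_univ_one]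

lemma expSum_one_value (n : ℕ) (hn : n ≠ 0) (s : ℤ) :
    expSum n 1 (fun _ => s) = if (n : ℤ) ∣ s then (n : ℂ) else 0 := by
  rw [expSum_one_eq]
  split_ifs with h
  · have : ∀ j : Fin n, ee n (s * (j : ℕ)) = 1 := by
      intro j
      obtain ⟨c, rfl⟩ := h
      rw [show (n : ℤ) * c * (j : ℕ) = (n : ℤ) * (c * j) by ring]
      exact ee_nat_mul n hn _
    simp [this]
  · have hne : ee n s ≠ 1 := fun h1 => h ((ee_eq_one_iff n hn s).1 h1)
    have hpn : (ee n s) ^ n = 1 := by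
      rw [← ee_pow, mul_comm]
      exact_mod_cast ee_nat_mul n hn s
    calc ∑ j : Fin n, ee n (s * (j : ℕ)) = ∑ j ∈ Finset.range n, (ee n s) ^ j := by
          rw [Fin.sum_univ_eq_sum_range (fun j : ℕ => ee n (s * (j : ℤ)))]
          exact Finset.sum_congr rfl fun j _ => ee_pow n s j
      _ = ((ee n s) ^ n - 1) / (ee n s - 1) := geom_sum_eq hne n
      _ = 0 := by rw [hpn]; simp

lemma recursion (n : ℕ) (k : ℕ) (m : Fin (k+1) → ℤ) :
    expSum n (k+1) m = expSum n 1 (fun _ => m 0) * expSum n k (fun i => m i.succ)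
      - ∑ i : Fin k, expSum n k (Function.update (fun i' => m i'.succ) i (m i.succ + m 0)) := by
  classical
  set g : Fin k → ℤ := fun i => m i.succ with hg
  set A : (Fin k → Fin n) → ℤ := fun s => ∑ i, g i * ((s i : ℕ) : ℤ) with hA
  have step1 : expSum n (k+1) m
      = ∑ j : Fin n, ∑ s : Fin k → Fin n,
          if (j ∉ Set.range s ∧ Function.Injective s)
          then ee n (m 0 * ((j : ℕ) : ℤ) + A s) else 0 := by
    rw [expSum_eq, Finset.sum_filter]
    rw [← Equiv.sum_comp (Fin.consEquiv (fun _ : Fin (k+1) => Fin n))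
      (fun t => if Function.Injective t then ee n (∑ i, m i * ((t i : ℕ) : ℤ)) else 0)]
    rw [Fintype.sum_prod_type]
    refine Finset.sum_congr rfl fun j _ => Finset.sum_congr rfl fun s _ => ?_
    have hc : (Fin.consEquiv (fun _ : Fin (k+1) => Fin n)) (j, s) = Fin.cons j s := rfl
    rw [hc]
    rw [if_congr Fin.cons_injective_iff rfl rfl]
    congr 1
    rw [Fin.sum_univ_succ]
    simp [hA, hg]
  have step2 : expSum n (k+1) m
      = (∑ j : Fin n, ∑ s : Fin k → Fin n,
           if Function.Injective s then ee n (m 0 * ((j : ℕ) : ℤ) + A s) else 0)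
        - ∑ j : Fin n, ∑ s : Fin k → Fin n,
           if Function.Injective s ∧ (∃ i, s i = j)
           then ee n (m 0 * ((j : ℕ) : ℤ) + A s) else 0 := by
    rw [step1, ← Finset.sum_sub_distrib]
    refine Finset.sum_congr rfl fun j _ => ?_
    rw [← Finset.sum_sub_distrib]
    refine Finset.sum_congr rfl fun s _ => ?_
    by_cases hs : Function.Injective s
    · by_cases hj : ∃ i, s i = j
      · rw [if_neg (by simp only [Set.mem_range]; tauto), if_pos hs, if_pos ⟨hs, hj⟩]
        ring
      · rw [if_pos ⟨by simpa [Set.mem_range] using hj, hs⟩, if_pos hs, if_neg (by tauto)]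
        ring
    · rw [if_neg (by tauto), if_neg hs, if_neg (by tauto)]
      ring
  have partA : (∑ j : Fin n, ∑ s : Fin k → Fin n,
      if Function.Injective s then ee n (m 0 * ((j : ℕ) : ℤ) + A s) else 0)
      = expSum n 1 (fun _ => m 0) * expSum n k g := by
    rw [expSum_one_eq, expSum_eq, Finset.sum_mul]
    refine Finset.sum_congr rfl fun j _ => ?_
    rw [Finset.mul_sum, Finset.sum_filter]
    refine Finset.sum_congr rfl fun s _ => ?_
    split_ifs with hs
    · rw [ee_add]
    · rfl
  have partB : (∑ j : Fin n, ∑ s : Fin k → Fin n,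
      if Function.Injective s ∧ (∃ i, s i = j)
      then ee n (m 0 * ((j : ℕ) : ℤ) + A s) else 0)
      = ∑ i : Fin k, expSum n k (Function.update g i (g i + m 0)) := by
    rw [Finset.sum_comm]
    have hupd : ∀ (i : Fin k) (s : Fin k → Fin n),
        m 0 * ((s i : ℕ) : ℤ) + A s = ∑ i', Function.update g i (g i + m 0) i' * ((s i' : ℕ) : ℤ) := by
      intro i s
      have hpt : ∀ i', Function.update g i (g i + m 0) i' = g i' + if i' = i then m 0 else 0 := by
        intro i'
        rcases eq_or_ne i' i with rfl | h
        · simp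
        · simp [Function.update_of_ne h, h]
      simp only [hpt, add_mul, ite_mul, zero_mul, Finset.sum_add_distrib,
        Finset.sum_ite_eq' Finset.univ i, Finset.mem_univ, if_true, hA]
      ring
    calc ∑ s : Fin k → Fin n, ∑ j : Fin n,
          (if Function.Injective s ∧ (∃ i, s i = j)
           then ee n (m 0 * ((j : ℕ) : ℤ) + A s) else 0)
        = ∑ s : Fin k → Fin n,
            (if Function.Injective s
             then ∑ i : Fin k, ee n (m 0 * ((s i : ℕ) : ℤ) + A s) else 0) := by
          refine Finset.sum_congr rfl fun s _ => ?_
          by_cases hs : Function.Injective s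
          · rw [if_pos hs]
            simp only [hs, true_and]
            have himg : Finset.univ.filter (fun j : Fin n => ∃ i, s i = j)
                = Finset.univ.image s := by
              ext j
              simp [Finset.mem_image, eq_comm]
            rw [← Finset.sum_filter, himg,
              Finset.sum_image (fun a _ b _ hab => hs hab)]
          · simp [hs]
      _ = ∑ s : Fin k → Fin n, ∑ i : Fin k,
            (if Function.Injective s
             then ee n (m 0 * ((s i : ℕ) : ℤ) + A s) else 0) := by
          refine Finset.sum_congr rfl fun s _ => ?_
          split_ifs with hs
          · rfl
          · simp
      _ = ∑ i : Fin k, ∑ s : Fin k → Fin n,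
            (if Function.Injective s
             then ee n (m 0 * ((s i : ℕ) : ℤ) + A s) else 0) := Finset.sum_comm
      _ = ∑ i : Fin k, expSum n k (Function.update g i (g i + m 0)) := by
          refine Finset.sum_congr rfl fun i _ => ?_
          rw [expSum_eq, Finset.sum_filter]
          refine Finset.sum_congr rfl fun s _ => ?_
          rw [hupd i s]
  rw [step2, partA, partB]


lemma key (n : ℕ) (hn : n ≠ 0) : ∀ k : ℕ, ∀ m : Fin (k+1) → ℤ,
    ∃ c : ℤ, expSum n (k+1) m = (c : ℂ) * expSum n 1 (fun _ => ∑ i, m i) := by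
  intro k
  induction k with
  | zero =>
    intro m
    refine ⟨1, ?_⟩
    have hm : (fun _ : Fin 1 => ∑ i, m i) = m := by
      funext i
      have hi : i = 0 := Fin.ext (by omega)
      subst hi
      rw [Fin.sum_univ_one]
    rw [hm]
    simp
  | succ k ih =>
    intro m
    set g : Fin (k+1) → ℤ := fun i => m i.succ with hg
    obtain ⟨c0, hc0⟩ := ih g
    choose c hc using fun i : Fin (k+1) => ih (Function.update g i (g i + m 0))
    set S : ℤ := ∑ i, m i with hS
    have hSg : ∑ i, g i = S - m 0 := by
      simp only [hS, Fin.sum_univ_succ (f := m), hg]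
      ring
    have hpt : ∀ (i i' : Fin (k+1)),
        Function.update g i (g i + m 0) i' = g i' + if i' = i then m 0 else 0 := by
      intro i i'
      rcases eq_or_ne i' i with rfl | h
      · simp
      · simp [Function.update_of_ne h, h]
    have hSu : ∀ i : Fin (k+1), ∑ i', Function.update g i (g i + m 0) i' = S := by
      intro i
      simp only [hpt, Finset.sum_add_distrib, Finset.sum_ite_eq' Finset.univ i,
        Finset.mem_univ, if_true]
      rw [hSg]
      ring
    have hd : ∃ d : ℤ, expSum n 1 (fun _ => m 0) * expSum n 1 (fun _ => S - m 0)
        = (d : ℂ) * expSum n 1 (fun _ => S) := by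
      rw [expSum_one_value n hn, expSum_one_value n hn, expSum_one_value n hn]
      by_cases h1 : (n : ℤ) ∣ m 0
      · by_cases h2 : (n : ℤ) ∣ S - m 0
        · have h3 : (n : ℤ) ∣ S := by
            have := dvd_add h1 h2
            simpa using this
          refine ⟨n, ?_⟩
          rw [if_pos h1, if_pos h2, if_pos h3]
          push_cast
          ring
        · exact ⟨0, by rw [if_pos h1, if_neg h2]; simp⟩
      · exact ⟨0, by rw [if_neg h1]; simp⟩
    obtain ⟨d, hdeq⟩ := hd
    refine ⟨d * c0 - ∑ i, c i, ?_⟩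
    rw [recursion n (k+1) m, ← hg]
    simp only [hSg] at hc0
    simp only [hSu] at hc
    rw [hc0]
    rw [Finset.sum_congr rfl fun i _ => hc i]
    rw [← Finset.sum_mul]
    push_cast
    linear_combination (c0 : ℂ) * hdeq

end ExpSumAux

/-- There is an integer `c` with `I(m_1, …, m_k) = c · I(m_1 + … + m_k)`; in particular
`I(m_1, …, m_k) = 0` whenever `m_1 + … + m_k ≢ 0 (mod n)`. -/
theorem expSum_eq_int_mul (n : ℕ) (hn : 3 ≤ n) (k : ℕ) (hk : 1 ≤ k) (m : Fin k → ℤ) :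
    (∃ c : ℤ, expSum n k m = (c : ℂ) * expSum n 1 (fun _ => ∑ i, m i)) ∧
      (¬ (n : ℤ) ∣ ∑ i, m i → expSum n k m = 0) := by
  have hn0 : n ≠ 0 := by omega
  obtain ⟨k', rfl⟩ : ∃ k', k = k' + 1 := ⟨k - 1, by omega⟩
  have h1 := ExpSumAux.key n hn0 k' m
  refine ⟨h1, fun h => ?_⟩
  obtain ⟨c, hc⟩ := h1
  rw [hc, ExpSumAux.expSum_one_value n hn0, if_neg h, mul_zero]
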